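/- Consider the gradient-tracking recursion $V_{k+1} = (V_k + D_{k+1} - D_k)W$ with $W$ satisfying $\|(W - I_d)W^k\| \le 2\alpha^k$ for some $\alpha \in (0,1)$ and all $k \ge 0$. Then $V_{k+1} = D_{k+1}W + \sum_{i=1}^{k} D_i (W - I_d) W^{k+1-i} - D_0 W^{k+1} + V_0 W^{k+1}$, and consequently if $\sup_k\|D_k\| \le M_D$ and $\|W\| \le 1$, then $\sup_k \|V_k\| \le \|V_0\| + (2 + \frac{2}{1-\alpha}) M_D$. -/

import Mathlib

open Matrix


/-- The Frobenius norm of a real matrix. -/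
noncomputable def frobNorm {m d : ℕ} (A : Matrix (Fin m) (Fin d) ℝ) : ℝ :=
  Real.sqrt (∑ i, ∑ j, (A i j) ^ 2)

/-- The spectral norm (ℓ² operator norm) of a real square matrix. -/
noncomputable def specNorm {d : ℕ} (M : Matrix (Fin d) (Fin d) ℝ) : ℝ :=
  ‖Matrix.toEuclideanCLM (𝕜 := ℝ) M‖

noncomputable def matE {m d : ℕ} : Matrix (Fin m) (Fin d) ℝ →ₗ[ℝ] EuclideanSpace ℝ (Fin m × Fin d) where
  toFun A := (WithLp.equiv 2 _).symm (fun p => A p.1 p.2)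
  map_add' _ _ := rfl
  map_smul' _ _ := rfl
lemma frob_eq_norm {m d : ℕ} (A : Matrix (Fin m) (Fin d) ℝ) : frobNorm A = ‖matE A‖ := by
  rw [EuclideanSpace.norm_eq, frobNorm]
  congr 1
  rw [Fintype.sum_prod_type]
  apply Finset.sum_congr rfl
  intro i _
  apply Finset.sum_congr rfl
  intro j _
  simp [matE, sq_abs]
lemma frob_nonneg {m d : ℕ} (A : Matrix (Fin m) (Fin d) ℝ) : 0 ≤ frobNorm A := Real.sqrt_nonneg _
lemma spec_nonneg {d : ℕ} (M : Matrix (Fin d) (Fin d) ℝ) : 0 ≤ specNorm M := norm_nonneg _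
set_option synthInstance.maxHeartbeats 1000000 in

set_option synthInstance.maxHeartbeats 1000000 in
lemma spec_transpose {d : ℕ} (M : Matrix (Fin d) (Fin d) ℝ) : specNorm Mᵀ = specNorm M := by
  have h : Mᵀ = Mᴴ := by ext i j; simp [Matrix.conjTranspose_apply]
  rw [specNorm, h, ← Matrix.star_eq_conjTranspose, map_star,
    ContinuousLinearMap.star_eq_adjoint]
  exact ContinuousLinearMap.adjoint.norm_map _

noncomputable def rowE {d : ℕ} (v : Fin d → ℝ) : EuclideanSpace ℝ (Fin d) :=
  (WithLp.equiv 2 _).symm v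

lemma frob_eq_rows {m d : ℕ} (A : Matrix (Fin m) (Fin d) ℝ) :
    frobNorm A = Real.sqrt (∑ i, ‖rowE (A i)‖ ^ 2) := by
  rw [frobNorm]
  congr 1
  apply Finset.sum_congr rfl
  intro i _
  rw [EuclideanSpace.norm_eq, Real.sq_sqrt (by positivity)]
  apply Finset.sum_congr rfl
  intro j _
  simp [rowE, sq_abs]

lemma frob_mul_le {m d : ℕ} (A : Matrix (Fin m) (Fin d) ℝ) (M : Matrix (Fin d) (Fin d) ℝ) :
    frobNorm (A * M) ≤ frobNorm A * specNorm M := by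
  have key : ∀ i, ‖rowE ((A * M) i)‖ ≤ specNorm M * ‖rowE (A i)‖ := by
    intro i
    have h1 : rowE ((A * M) i) = Matrix.toEuclideanCLM (𝕜 := ℝ) Mᵀ (rowE (A i)) := by
      simp only [rowE]
      rw [show (WithLp.equiv 2 (Fin d → ℝ)).symm (A i) = WithLp.toLp 2 (A i) from rfl,
        Matrix.toEuclideanCLM_toLp]
      show WithLp.toLp 2 ((A * M) i) = _
      congr 1
      funext j
      simp [Matrix.mul_apply, Matrix.mulVec, dotProduct, mul_comm]
    rw [h1, ← spec_transpose M]
    exact (Matrix.toEuclideanCLM (𝕜 := ℝ) Mᵀ).le_opNorm _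
  rw [frob_eq_rows, frob_eq_rows]
  have h2 : ∑ i, ‖rowE ((A * M) i)‖ ^ 2 ≤ (specNorm M) ^ 2 * ∑ i, ‖rowE (A i)‖ ^ 2 := by
    rw [Finset.mul_sum]
    apply Finset.sum_le_sum
    intro i _
    rw [← mul_pow]
    exact pow_le_pow_left₀ (norm_nonneg _) (key i) 2
  calc Real.sqrt (∑ i, ‖rowE ((A * M) i)‖ ^ 2)
      ≤ Real.sqrt ((specNorm M) ^ 2 * ∑ i, ‖rowE (A i)‖ ^ 2) := Real.sqrt_le_sqrt h2
    _ = specNorm M * Real.sqrt (∑ i, ‖rowE (A i)‖ ^ 2) := by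
        rw [Real.sqrt_mul (sq_nonneg _), Real.sqrt_sq (spec_nonneg M)]
    _ = Real.sqrt (∑ i, ‖rowE (A i)‖ ^ 2) * specNorm M := mul_comm _ _

lemma frob_add_le {m d : ℕ} (A B : Matrix (Fin m) (Fin d) ℝ) :
    frobNorm (A + B) ≤ frobNorm A + frobNorm B := by
  rw [frob_eq_norm, frob_eq_norm, frob_eq_norm, map_add]; exact norm_add_le _ _

lemma frob_sub_le {m d : ℕ} (A B : Matrix (Fin m) (Fin d) ℝ) :
    frobNorm (A - B) ≤ frobNorm A + frobNorm B := by
  rw [frob_eq_norm, frob_eq_norm, frob_eq_norm, map_sub]; exact norm_sub_le _ _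

lemma frob_sum_le {m d : ℕ} {ι : Type*} (s : Finset ι) (f : ι → Matrix (Fin m) (Fin d) ℝ) :
    frobNorm (∑ i ∈ s, f i) ≤ ∑ i ∈ s, frobNorm (f i) := by
  rw [frob_eq_norm, map_sum]
  refine le_trans (norm_sum_le _ _) (le_of_eq ?_)
  exact Finset.sum_congr rfl fun i _ => (frob_eq_norm (f i)).symm

lemma spec_mul_le {d : ℕ} (A B : Matrix (Fin d) (Fin d) ℝ) :
    specNorm (A * B) ≤ specNorm A * specNorm B := by
  rw [specNorm, _root_.map_mul]; exact norm_mul_le _ _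

lemma spec_pow_le {d : ℕ} (W : Matrix (Fin d) (Fin d) ℝ) (h : specNorm W ≤ 1) :
    ∀ k, specNorm (W ^ k) ≤ 1 := by
  intro k
  induction k with
  | zero => rw [pow_zero, specNorm, _root_.map_one]; exact ContinuousLinearMap.norm_id_le
  | succ n ih =>
      calc specNorm (W ^ (n + 1)) = specNorm (W ^ n * W) := by rw [pow_succ]
        _ ≤ specNorm (W ^ n) * specNorm W := spec_mul_le _ _
        _ ≤ 1 * 1 := mul_le_mul ih h (spec_nonneg _) zero_le_one
        _ = 1 := one_mul 1


theorem stmt_16 {m d : ℕ} (hd : 0 < d) (W : Matrix (Fin d) (Fin d) ℝ)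
    (α : ℝ) (hα : α ∈ Set.Ioo (0 : ℝ) 1)
    (hWk : ∀ k : ℕ, specNorm ((W - 1) * W ^ k) ≤ 2 * α ^ k)
    (hWnorm : specNorm W ≤ 1)
    (V D : ℕ → Matrix (Fin m) (Fin d) ℝ)
    (hrec : ∀ k, V (k + 1) = (V k + D (k + 1) - D k) * W)
    (M_D : ℝ) (hD : ∀ k, frobNorm (D k) ≤ M_D) :
    (∀ k, V (k + 1) = D (k + 1) * W + (∑ i ∈ Finset.Icc 1 k, D i * ((W - 1) * W ^ (k + 1 - i)))
        - D 0 * W ^ (k + 1) + V 0 * W ^ (k + 1)) ∧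
      ∀ k, frobNorm (V k) ≤ frobNorm (V 0) + (2 + 2 / (1 - α)) * M_D := by
  obtain ⟨hα0, hα1⟩ := hα
  have h1α : 0 < 1 - α := by linarith
  have part1 : ∀ k, V (k + 1) = D (k + 1) * W
      + (∑ i ∈ Finset.Icc 1 k, D i * ((W - 1) * W ^ (k + 1 - i)))
      - D 0 * W ^ (k + 1) + V 0 * W ^ (k + 1) := by
    intro k
    induction k with
    | zero =>
        rw [hrec 0]
        rw [show Finset.Icc 1 0 = (∅ : Finset ℕ) from Finset.Icc_eq_empty (by omega)]
        simp only [Finset.sum_empty, zero_add, pow_one, Matrix.add_mul, Matrix.sub_mul]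
        abel
    | succ n ih =>
        rw [hrec (n + 1), ih]
        have hsum : ∑ i ∈ Finset.Icc 1 (n + 1), D i * ((W - 1) * W ^ (n + 1 + 1 - i))
            = (∑ i ∈ Finset.Icc 1 n, D i * ((W - 1) * W ^ (n + 1 - i))) * W
              + D (n + 1) * ((W - 1) * W) := by
          rw [Finset.sum_Icc_succ_top (by omega : 1 ≤ n + 1)]
          congr 1
          · rw [Matrix.sum_mul]
            apply Finset.sum_congr rfl
            intro i hi
            rw [Finset.mem_Icc] at hi
            have he : n + 1 + 1 - i = (n + 1 - i) + 1 := by omega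
            rw [he, pow_succ, Matrix.mul_assoc, Matrix.mul_assoc]
          · norm_num
        rw [hsum]
        simp only [Matrix.add_mul, Matrix.sub_mul, Matrix.mul_sub, Matrix.one_mul, pow_succ, Matrix.mul_assoc]
        abel
  refine ⟨part1, ?_⟩
  have hM0 : 0 ≤ M_D := le_trans (frob_nonneg (D 0)) (hD 0)
  have hgeo : ∀ n : ℕ, (∑ j ∈ Finset.range n, α ^ j) ≤ 1 / (1 - α) := by
    intro n
    rw [geom_sum_eq (ne_of_lt hα1)]
    have heq : (α ^ n - 1) / (α - 1) = (1 - α ^ n) / (1 - α) := by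
      rw [← neg_div_neg_eq]; ring_nf
    rw [heq]
    have hp : (0:ℝ) ≤ α ^ n := le_of_lt (pow_pos hα0 n)
    gcongr
    linarith
  have tb : ∀ (A : Matrix (Fin m) (Fin d) ℝ) (X : Matrix (Fin d) (Fin d) ℝ) (a b : ℝ),
      frobNorm A ≤ a → specNorm X ≤ b → frobNorm (A * X) ≤ a * b := by
    intro A X a b h1 h2
    calc frobNorm (A * X) ≤ frobNorm A * specNorm X := frob_mul_le _ _
      _ ≤ a * b := mul_le_mul h1 h2 (spec_nonneg _) (le_trans (frob_nonneg A) h1)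
  have hcoef : 0 ≤ 2 + 2 / (1 - α) := by positivity
  intro k
  cases k with
  | zero => nlinarith [mul_nonneg hcoef hM0]
  | succ n =>
      rw [part1 n]
      have hIc : ∑ i ∈ Finset.Icc 1 n, α ^ (n + 1 - i) ≤ 1 / (1 - α) := by
        have h1 : ∑ i ∈ Finset.Icc 1 n, α ^ (n + 1 - i) = ∑ j ∈ Finset.Icc 1 n, α ^ j := by
          apply Finset.sum_nbij' (fun i => n + 1 - i) (fun j => n + 1 - j)
          · intro a ha; rw [Finset.mem_Icc] at *; omega
          · intro a ha; rw [Finset.mem_Icc] at *; omega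
          · intro a ha; rw [Finset.mem_Icc] at ha; omega
          · intro a ha; rw [Finset.mem_Icc] at ha; omega
          · intro a _; rfl
        rw [h1]
        calc ∑ j ∈ Finset.Icc 1 n, α ^ j ≤ ∑ j ∈ Finset.range (n + 1), α ^ j := by
              apply Finset.sum_le_sum_of_subset_of_nonneg
              · intro j hj; rw [Finset.mem_Icc] at hj; rw [Finset.mem_range]; omega
              · intro j _ _; exact le_of_lt (pow_pos hα0 j)
          _ ≤ 1 / (1 - α) := hgeo _
      have t1 : frobNorm (D (n + 1) * W) ≤ M_D * 1 := tb _ _ _ _ (hD _) hWnorm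
      have t3 : frobNorm (D 0 * W ^ (n + 1)) ≤ M_D * 1 := tb _ _ _ _ (hD 0) (spec_pow_le W hWnorm _)
      have t4 : frobNorm (V 0 * W ^ (n + 1)) ≤ frobNorm (V 0) * 1 :=
        tb _ _ _ _ (le_refl _) (spec_pow_le W hWnorm _)
      have t2 : frobNorm (∑ i ∈ Finset.Icc 1 n, D i * ((W - 1) * W ^ (n + 1 - i)))
          ≤ 2 * M_D * (1 / (1 - α)) := by
        calc frobNorm (∑ i ∈ Finset.Icc 1 n, D i * ((W - 1) * W ^ (n + 1 - i)))
            ≤ ∑ i ∈ Finset.Icc 1 n, frobNorm (D i * ((W - 1) * W ^ (n + 1 - i))) :=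
              frob_sum_le _ _
          _ ≤ ∑ i ∈ Finset.Icc 1 n, M_D * (2 * α ^ (n + 1 - i)) :=
              Finset.sum_le_sum fun i _ => tb _ _ _ _ (hD i) (hWk _)
          _ = 2 * M_D * ∑ i ∈ Finset.Icc 1 n, α ^ (n + 1 - i) := by
              rw [Finset.mul_sum]; exact Finset.sum_congr rfl fun i _ => by ring
          _ ≤ 2 * M_D * (1 / (1 - α)) :=
              mul_le_mul_of_nonneg_left hIc (by positivity)
      have step1 : frobNorm (D (n + 1) * W
            + (∑ i ∈ Finset.Icc 1 n, D i * ((W - 1) * W ^ (n + 1 - i)))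
            - D 0 * W ^ (n + 1) + V 0 * W ^ (n + 1))
          ≤ frobNorm (D (n + 1) * W + (∑ i ∈ Finset.Icc 1 n, D i * ((W - 1) * W ^ (n + 1 - i)))
              - D 0 * W ^ (n + 1)) + frobNorm (V 0 * W ^ (n + 1)) := frob_add_le _ _
      have step2 : frobNorm (D (n + 1) * W
            + (∑ i ∈ Finset.Icc 1 n, D i * ((W - 1) * W ^ (n + 1 - i))) - D 0 * W ^ (n + 1))
          ≤ frobNorm (D (n + 1) * W + (∑ i ∈ Finset.Icc 1 n, D i * ((W - 1) * W ^ (n + 1 - i))))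
            + frobNorm (D 0 * W ^ (n + 1)) := frob_sub_le _ _
      have step3 : frobNorm (D (n + 1) * W
            + (∑ i ∈ Finset.Icc 1 n, D i * ((W - 1) * W ^ (n + 1 - i))))
          ≤ frobNorm (D (n + 1) * W)
            + frobNorm (∑ i ∈ Finset.Icc 1 n, D i * ((W - 1) * W ^ (n + 1 - i))) := frob_add_le _ _
      have hring : (2 + 2 / (1 - α)) * M_D = M_D * 1 + M_D * 1 + 2 * M_D * (1 / (1 - α)) := by
        field_simp; ring
      linarith
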